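/- Let J ∈ 𝒥_{k,N} with N = kn − ℓ, 0 ≤ ℓ < k, and let μ = φ(J) be its spectral measure. Then the monic orthogonal polynomial Π_{n−1} of degree n−1 for μ exists and is unique, and rank ⟨Π_{n−1}, Π_{n−1}⟩_μ = k − ℓ. -/

import Mathlib

open Matrix Polynomial

noncomputable section

/-- `Esel k N b` is the block selection matrix `E_{b+1} ∈ ℂ^{N×k}` whose rows
`b*k, …, b*k + (k-1)` form the identity `I_k` (zero-based indexing). -/
def Esel (k N : ℕ) (b : ℕ) : Matrix (Fin N) (Fin k) ℂ :=
  Matrix.of fun i a => if (i : ℕ) = b * k + (a : ℕ) then 1 else 0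

/-- The last (possibly smaller) block selection matrix `E_n ∈ ℂ^{N×(k-ℓ)}`. -/
def EselLast (k n ℓ : ℕ) : Matrix (Fin (n * k - ℓ)) (Fin (k - ℓ)) ℂ :=
  Matrix.of fun i a => if (i : ℕ) = (n - 1) * k + (a : ℕ) then 1 else 0

/-- A square matrix is upper triangular with (real) positive diagonal entries. -/
def UpperTriPosDiag {k : ℕ} (M : Matrix (Fin k) (Fin k) ℂ) : Prop :=
  ∀ r c : Fin k, ((c : ℕ) < (r : ℕ) → M r c = 0) ∧ (r = c → 0 < (M r c).re ∧ (M r c).im = 0)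

/-- A (rectangular) matrix is in row echelon form with positive pivots. -/
def RowEchelonPosPivots {r m : ℕ} (R : Matrix (Fin r) (Fin m) ℂ) : Prop :=
  ∃ p : Fin r → Fin m, StrictMono p ∧
    ∀ i : Fin r, (0 < (R i (p i)).re ∧ (R i (p i)).im = 0) ∧
      ∀ j : Fin m, (j : ℕ) < (p i : ℕ) → R i j = 0

/-- The class `𝒥_{k,N}` (`N = n*k - ℓ`): Hermitian block tridiagonal matrices with
`k×k` blocks (the last diagonal block of size `(k-ℓ)×(k-ℓ)`), subdiagonal blocks
`B_0,…,B_{n-3}` upper triangular with positive diagonal and `B_{n-2}` in row echelon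
form with positive pivots. -/
def IsJkN (k n ℓ : ℕ) (J : Matrix (Fin (n * k - ℓ)) (Fin (n * k - ℓ)) ℂ) : Prop :=
  J.IsHermitian ∧
  (∀ i j : Fin (n * k - ℓ),
      ((i : ℕ) / k + 2 ≤ (j : ℕ) / k ∨ (j : ℕ) / k + 2 ≤ (i : ℕ) / k) → J i j = 0) ∧
  (∀ b : ℕ, b + 3 ≤ n →
      UpperTriPosDiag ((Esel k (n * k - ℓ) (b + 1))ᴴ * J * Esel k (n * k - ℓ) b)) ∧
  RowEchelonPosPivots ((EselLast k n ℓ)ᴴ * J * Esel k (n * k - ℓ) (n - 2))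


/-- The quasi-inner product `⟨P,Q⟩_μ = Σ_j P(λ_j)^* v_j v_j^* Q(λ_j)` of matrix
polynomials with respect to the spectral measure. -/
def innerPoly {k N : ℕ} (lam : Fin N → ℝ) (v : Fin N → Fin k → ℂ)
    (P Q : Polynomial (Matrix (Fin k) (Fin k) ℂ)) : Matrix (Fin k) (Fin k) ℂ :=
  ∑ j, (P.eval ((lam j : ℂ) • (1 : Matrix (Fin k) (Fin k) ℂ)))ᴴ *
      vecMulVec (v j) (star (v j)) *
      Q.eval ((lam j : ℂ) • (1 : Matrix (Fin k) (Fin k) ℂ))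

namespace MopAux

lemma upperTri_det_isUnit {k : ℕ} {M : Matrix (Fin k) (Fin k) ℂ}
    (hM : UpperTriPosDiag M) : IsUnit M.det := by
  have htri : M.BlockTriangular id := by
    intro i j hij
    exact (hM i j).1 hij
  rw [Matrix.det_of_upperTriangular htri]
  rw [isUnit_iff_ne_zero]
  apply Finset.prod_ne_zero_iff.2
  intro i _
  obtain ⟨hre, _⟩ := (hM i i).2 rfl
  intro h
  rw [h] at hre
  simp at hre

lemma upperTri_mulVec_injective {k : ℕ} {M : Matrix (Fin k) (Fin k) ℂ}
    (hM : UpperTriPosDiag M) : Function.Injective M.mulVec := by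
  intro x y hxy
  have h1 : M⁻¹ * M = 1 := Matrix.nonsing_inv_mul M (upperTri_det_isUnit hM)
  have := congrArg (M⁻¹.mulVec) hxy
  rwa [Matrix.mulVec_mulVec, Matrix.mulVec_mulVec, h1, Matrix.one_mulVec,
    Matrix.one_mulVec] at this

lemma echelon_mulVec_surjective {r m : ℕ} {R : Matrix (Fin r) (Fin m) ℂ}
    (hR : RowEchelonPosPivots R) : Function.Surjective R.mulVec := by
  obtain ⟨p, hp, hpiv⟩ := hR
  set S : Matrix (Fin r) (Fin r) ℂ := Matrix.of fun i i' => R i (p i') with hS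
  have hSut : UpperTriPosDiag S := by
    intro i j
    constructor
    · intro hji
      exact (hpiv i).2 (p j) (hp (show j < i from hji))
    · intro hij; subst hij; exact (hpiv i).1
  have hdet := upperTri_det_isUnit hSut
  have h1 : S * S⁻¹ = 1 := Matrix.mul_nonsing_inv S hdet
  intro y
  set z : Fin r → ℂ := S⁻¹.mulVec y with hz
  refine ⟨fun j => ∑ i', if p i' = j then z i' else 0, ?_⟩
  funext i
  have : (R.mulVec fun j => ∑ i', if p i' = j then z i' else 0) i
      = ∑ i', R i (p i') * z i' := by
    rw [Matrix.mulVec]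
    show ∑ j, R i j * ∑ i', ite _ _ _ = _
    simp only [Finset.mul_sum]
    rw [Finset.sum_comm]
    refine Finset.sum_congr rfl fun i' _ => ?_
    rw [Finset.sum_eq_single (p i')]
    · simp
    · intro j _ hj
      simp [Ne.symm hj]
    · simp
  rw [this]
  have : ∑ i', R i (p i') * z i' = (S.mulVec z) i := rfl
  rw [this, hz, Matrix.mulVec_mulVec, h1, Matrix.one_mulVec]


section Blocks

variable {k n ℓ : ℕ} {J : Matrix (Fin (n * k - ℓ)) (Fin (n * k - ℓ)) ℂ}

/-- Everything below or left of the first `m+1` block rows of `J^m E` vanishes. -/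
lemma factZ (hk : 1 ≤ k) (hJ : IsJkN k n ℓ J) (m : ℕ) (c : Fin k → ℂ) :
    ∀ i : Fin (n * k - ℓ), m * k + k ≤ (i : ℕ) →
      ((J ^ m * Esel k (n * k - ℓ) 0) *ᵥ c) i = 0 := by
  induction m with
  | zero =>
    intro i hi
    rw [pow_zero, Matrix.one_mul]
    show ∑ a, Esel k (n * k - ℓ) 0 i a * c a = 0
    apply Finset.sum_eq_zero
    intro a _
    have ha := a.isLt
    have : (i : ℕ) ≠ 0 * k + (a : ℕ) := by omega
    simp only [Esel, Matrix.of_apply]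
    rw [if_neg this, zero_mul]
  | succ m ih =>
    intro i hi
    have e1 : (m + 1) * k = m * k + k := by ring
    rw [pow_succ', Matrix.mul_assoc, ← Matrix.mulVec_mulVec]
    show ∑ j, J i j * ((J ^ m * Esel k (n * k - ℓ) 0) *ᵥ c) j = 0
    apply Finset.sum_eq_zero
    intro j _
    by_cases hj : m * k + k ≤ (j : ℕ)
    · rw [ih j hj, mul_zero]
    · have hJij : J i j = 0 := by
        apply hJ.2.1
        right
        have h1 : (j : ℕ) / k < m + 1 := by
          rw [Nat.div_lt_iff_lt_mul (by omega : 0 < k)]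
          calc (j : ℕ) < m * k + k := by omega
            _ = (m + 1) * k := by ring
        have h2 : m + 2 ≤ (i : ℕ) / k := by
          rw [Nat.le_div_iff_mul_le (by omega : 0 < k)]
          calc (m + 2) * k = m * k + k + k := by ring
            _ ≤ (i : ℕ) := by omega
        omega
      rw [hJij, zero_mul]

/-- Expansion of a block-row entry of `J^(m+1) E c` over the previous block row. -/
lemma rowEntry (hk : 1 ≤ k) (hJ : IsJkN k n ℓ J) (m : ℕ) (c : Fin k → ℂ)
    (i : Fin (n * k - ℓ)) (hi1 : m * k + k ≤ (i : ℕ)) (hi2 : (i : ℕ) < m * k + k + k) :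
    ((J ^ (m + 1) * Esel k (n * k - ℓ) 0) *ᵥ c) i =
      ∑ b : Fin k,
        J i ⟨m * k + (b : ℕ), by have hb := b.isLt; have hii := i.isLt; omega⟩ *
          ((J ^ m * Esel k (n * k - ℓ) 0) *ᵥ c)
            ⟨m * k + (b : ℕ), by have hb := b.isLt; have hii := i.isLt; omega⟩ := by
  rw [pow_succ', Matrix.mul_assoc, ← Matrix.mulVec_mulVec]
  show ∑ j, J i j * ((J ^ m * Esel k (n * k - ℓ) 0) *ᵥ c) j = _
  set w := (J ^ m * Esel k (n * k - ℓ) 0) *ᵥ c with hw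
  set e : Fin k → Fin (n * k - ℓ) := fun b =>
    ⟨m * k + (b : ℕ), by have hb := b.isLt; have hii := i.isLt; omega⟩ with he
  have hinj : Function.Injective e := by
    intro a b hab
    rw [Fin.ext_iff] at hab ⊢
    simp only [he] at hab
    omega
  have hzero : ∀ j : Fin (n * k - ℓ), j ∈ Finset.univ →
      j ∉ Finset.univ.image e → J i j * w j = 0 := by
    intro j _ hj
    have hcase : (j : ℕ) < m * k ∨ m * k + k ≤ (j : ℕ) := by
      by_contra hcon
      push_neg at hcon
      apply hj
      refine Finset.mem_image.mpr ⟨⟨(j : ℕ) - m * k, by omega⟩, Finset.mem_univ _, ?_⟩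
      simp only [he]
      rw [Fin.ext_iff]
      simp
      omega
    rcases hcase with hlt | hge
    · have hJij : J i j = 0 := by
        apply hJ.2.1
        right
        have h1 : (j : ℕ) / k < m := by
          rw [Nat.div_lt_iff_lt_mul (by omega : 0 < k)]
          omega
        have h2 : m + 1 ≤ (i : ℕ) / k := by
          rw [Nat.le_div_iff_mul_le (by omega : 0 < k)]
          calc (m + 1) * k = m * k + k := by ring
            _ ≤ (i : ℕ) := hi1
        omega
      rw [hJij, zero_mul]
    · rw [hw, factZ hk hJ m c j hge, mul_zero]
  calc ∑ j, J i j * w j = ∑ j ∈ Finset.univ.image e, J i j * w j :=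
        (Finset.sum_subset (Finset.subset_univ _) hzero).symm
    _ = ∑ b : Fin k, J i (e b) * w (e b) :=
        Finset.sum_image (fun a _ b _ hab => hinj hab)

/-- Entries of the sandwiched block `E_{b'}ᴴ J E_b`. -/
lemma sandwich (b' b : ℕ) (hb' : b' * k + k ≤ n * k - ℓ) (hb : b * k + k ≤ n * k - ℓ)
    (a c : Fin k) :
    ((Esel k (n * k - ℓ) b')ᴴ * J * Esel k (n * k - ℓ) b) a c =
      J ⟨b' * k + (a : ℕ), by have := a.isLt; omega⟩
        ⟨b * k + (c : ℕ), by have := c.isLt; omega⟩ := by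
  show ∑ j, (∑ i, star (Esel k (n * k - ℓ) b' i a) * J i j) * Esel k (n * k - ℓ) b j c = _
  rw [Finset.sum_eq_single (⟨b * k + (c : ℕ), by have := c.isLt; omega⟩ : Fin (n * k - ℓ))]
  · rw [Finset.sum_eq_single (⟨b' * k + (a : ℕ), by have := a.isLt; omega⟩ : Fin (n * k - ℓ))]
    · simp [Esel]
    · intro i _ hi
      have : (i : ℕ) ≠ b' * k + (a : ℕ) := fun h => hi (Fin.ext h)
      simp [Esel, this]
    · simp
  · intro j _ hj
    have : (j : ℕ) ≠ b * k + (c : ℕ) := fun h => hj (Fin.ext h)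
    simp [Esel, this]
  · simp

/-- Entries of the sandwiched last block `E_nᴴ J E_b`. -/
lemma sandwichLast (hk : 1 ≤ k) (hn : 2 ≤ n) (hℓ : ℓ < k) (b : ℕ)
    (hb : b * k + k ≤ n * k - ℓ) (a : Fin (k - ℓ)) (c : Fin k) :
    ((EselLast k n ℓ)ᴴ * J * Esel k (n * k - ℓ) b) a c =
      J ⟨(n - 1) * k + (a : ℕ), by
          have := a.isLt
          have h2 : (n - 1) * k = n * k - k := Nat.sub_one_mul n k
          have h3 : k ≤ n * k := Nat.le_mul_of_pos_left k (by omega)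
          omega⟩
        ⟨b * k + (c : ℕ), by have := c.isLt; omega⟩ := by
  show ∑ j, (∑ i, star (EselLast k n ℓ i a) * J i j) * Esel k (n * k - ℓ) b j c = _
  rw [Finset.sum_eq_single (⟨b * k + (c : ℕ), by have := c.isLt; omega⟩ : Fin (n * k - ℓ))]
  · rw [Finset.sum_eq_single (⟨(n - 1) * k + (a : ℕ), by
        have := a.isLt
        have h2 : (n - 1) * k = n * k - k := Nat.sub_one_mul n k
        have h3 : k ≤ n * k := Nat.le_mul_of_pos_left k (by omega)
        omega⟩ : Fin (n * k - ℓ))]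
    · simp [Esel, EselLast]
    · intro i _ hi
      have : (i : ℕ) ≠ (n - 1) * k + (a : ℕ) := fun h => hi (Fin.ext h)
      simp [EselLast, this]
    · simp
  · intro j _ hj
    have : (j : ℕ) ≠ b * k + (c : ℕ) := fun h => hj (Fin.ext h)
    simp [Esel, this]
  · simp

/-- The `m`-th diagonal-block map `c ↦ (J^m E c)` restricted to block row `m`. -/
def gmap (J : Matrix (Fin (n * k - ℓ)) (Fin (n * k - ℓ)) ℂ) (m : ℕ)
    (h : m * k + k ≤ n * k - ℓ) : (Fin k → ℂ) →ₗ[ℂ] (Fin k → ℂ) where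
  toFun c := fun a =>
    ((J ^ m * Esel k (n * k - ℓ) 0) *ᵥ c) ⟨m * k + (a : ℕ), by have := a.isLt; omega⟩
  map_add' x y := by
    funext a
    simp [Matrix.mulVec_add]
  map_smul' r x := by
    funext a
    simp [Matrix.mulVec_smul]

lemma gmap_zero (h : 0 * k + k ≤ n * k - ℓ) (c : Fin k → ℂ) :
    gmap J 0 h c = c := by
  funext a
  show ((J ^ 0 * Esel k (n * k - ℓ) 0) *ᵥ c) ⟨0 * k + (a : ℕ), _⟩ = c a
  rw [pow_zero, Matrix.one_mul]
  show ∑ b, Esel k (n * k - ℓ) 0 ⟨0 * k + (a : ℕ), _⟩ b * c b = c a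
  rw [Finset.sum_eq_single a]
  · simp [Esel]
  · intro b _ hb
    simp only [Esel, Matrix.of_apply]
    have hne : 0 * k + (a : ℕ) ≠ 0 * k + (b : ℕ) := by
      intro hcon
      exact absurd (Fin.ext (by omega : (a : ℕ) = (b : ℕ))) (fun h => hb h.symm)
    rw [if_neg hne, zero_mul]
  · simp

lemma gmap_succ (m : ℕ) (h1 : m * k + k ≤ n * k - ℓ) (h2 : (m + 1) * k + k ≤ n * k - ℓ)
    (hk : 1 ≤ k) (hJ : IsJkN k n ℓ J) (c : Fin k → ℂ) :
    gmap J (m + 1) h2 c =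
      ((Esel k (n * k - ℓ) (m + 1))ᴴ * J * Esel k (n * k - ℓ) m) *ᵥ (gmap J m h1 c) := by
  have e1 : (m + 1) * k = m * k + k := by ring
  funext a
  show ((J ^ (m + 1) * Esel k (n * k - ℓ) 0) *ᵥ c) ⟨(m + 1) * k + (a : ℕ), _⟩ = _
  rw [rowEntry hk hJ m c _ (show m * k + k ≤ (m + 1) * k + (a : ℕ) by omega)
    (show (m + 1) * k + (a : ℕ) < m * k + k + k by have := a.isLt; omega)]
  show _ = ∑ b, ((Esel k (n * k - ℓ) (m + 1))ᴴ * J * Esel k (n * k - ℓ) m) a b * gmap J m h1 c b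
  refine Finset.sum_congr rfl fun b _ => ?_
  rw [sandwich (m + 1) m h2 h1 a b]
  rfl

/-- The last block-row map (of height `k - ℓ`). -/
def gLmap (J : Matrix (Fin (n * k - ℓ)) (Fin (n * k - ℓ)) ℂ) (hk : 1 ≤ k) (hn : 2 ≤ n)
    (hℓ : ℓ < k) : (Fin k → ℂ) →ₗ[ℂ] (Fin (k - ℓ) → ℂ) where
  toFun c := fun a =>
    ((J ^ (n - 1) * Esel k (n * k - ℓ) 0) *ᵥ c)
      ⟨(n - 1) * k + (a : ℕ), by
        have := a.isLt
        have h2 : (n - 1) * k = n * k - k := Nat.sub_one_mul n k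
        have h3 : k ≤ n * k := Nat.le_mul_of_pos_left k (by omega)
        omega⟩
  map_add' x y := by
    funext a
    simp [Matrix.mulVec_add]
  map_smul' r x := by
    funext a
    simp [Matrix.mulVec_smul]

lemma nm2_bound (hk : 1 ≤ k) (hn : 2 ≤ n) (hℓ : ℓ < k) : (n - 2) * k + k ≤ n * k - ℓ := by
  have h2 : (n - 2) * k + k + k = n * k := by
    have : n - 2 + 1 + 1 = n := by omega
    calc (n - 2) * k + k + k = (n - 2 + 1 + 1) * k := by ring
      _ = n * k := by rw [this]
  omega

lemma gLmap_eq (hk : 1 ≤ k) (hn : 2 ≤ n) (hℓ : ℓ < k) (hJ : IsJkN k n ℓ J) (c : Fin k → ℂ) :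
    gLmap J hk hn hℓ c =
      ((EselLast k n ℓ)ᴴ * J * Esel k (n * k - ℓ) (n - 2)) *ᵥ
        (gmap J (n - 2) (nm2_bound hk hn hℓ) c) := by
  have e0 : n - 1 = (n - 2) + 1 := by omega
  have e1 : (n - 1) * k = (n - 2) * k + k := by rw [e0]; ring
  have e2 := nm2_bound (n := n) (ℓ := ℓ) hk hn hℓ
  funext a
  show ((J ^ (n - 1) * Esel k (n * k - ℓ) 0) *ᵥ c) ⟨(n - 1) * k + (a : ℕ), _⟩ = _
  have ha := a.isLt
  rw [show (J ^ (n - 1) : Matrix _ _ ℂ) = J ^ ((n - 2) + 1) by rw [← e0]]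
  rw [rowEntry hk hJ (n - 2) c _ (show (n - 2) * k + k ≤ (n - 1) * k + (a : ℕ) by omega)
    (show (n - 1) * k + (a : ℕ) < (n - 2) * k + k + k by omega)]
  show _ = ∑ b, ((EselLast k n ℓ)ᴴ * J * Esel k (n * k - ℓ) (n - 2)) a b *
      gmap J (n - 2) (nm2_bound hk hn hℓ) c b
  refine Finset.sum_congr rfl fun b _ => ?_
  rw [sandwichLast hk hn hℓ (n - 2) e2 a b]
  rfl

lemma bnd (hk : 1 ≤ k) (hℓ : ℓ < k) {m : ℕ} (hm : m + 2 ≤ n) : m * k + k ≤ n * k - ℓ := by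
  have e : (m + 2) * k = m * k + k + k := by ring
  have h3 : (m + 2) * k ≤ n * k := Nat.mul_le_mul_right k hm
  omega

lemma gmap_inj (hk : 1 ≤ k) (hℓ : ℓ < k) (hJ : IsJkN k n ℓ J) :
    ∀ m, m + 2 ≤ n → ∀ hb : m * k + k ≤ n * k - ℓ, Function.Injective (gmap J m hb) := by
  intro m
  induction m with
  | zero =>
    intro hm hb x y hxy
    rw [gmap_zero (J := J) hb x, gmap_zero (J := J) hb y] at hxy
    exact hxy
  | succ m ih =>
    intro hm hb x y hxy
    have hb1 : m * k + k ≤ n * k - ℓ := bnd hk hℓ (by omega)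
    rw [gmap_succ m hb1 hb hk hJ x, gmap_succ m hb1 hb hk hJ y] at hxy
    have hut := hJ.2.2.1 m (by omega)
    exact ih (by omega) hb1 (upperTri_mulVec_injective hut hxy)

lemma gmap_surj (hk : 1 ≤ k) (hℓ : ℓ < k) (hJ : IsJkN k n ℓ J)
    (m : ℕ) (hm : m + 2 ≤ n) (hb : m * k + k ≤ n * k - ℓ) :
    Function.Surjective (gmap J m hb) :=
  (LinearMap.injective_iff_surjective).mp (gmap_inj hk hℓ hJ m hm hb)

lemma gL_surj (hk : 1 ≤ k) (hn : 2 ≤ n) (hℓ : ℓ < k) (hJ : IsJkN k n ℓ J) :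
    Function.Surjective (gLmap J hk hn hℓ) := by
  intro y
  obtain ⟨z, hz⟩ := echelon_mulVec_surjective hJ.2.2.2 y
  obtain ⟨c, hc⟩ := gmap_surj hk hℓ hJ (n - 2) (by omega) (nm2_bound hk hn hℓ) z
  exact ⟨c, by rw [gLmap_eq hk hn hℓ hJ, hc, hz]⟩

lemma injAux (hk : 1 ≤ k) (hℓ : ℓ < k) (hJ : IsJkN k n ℓ J) :
    ∀ t, t + 1 ≤ n → ∀ C : ℕ → Fin k → ℂ,
      (∑ m ∈ Finset.range t, (J ^ m * Esel k (n * k - ℓ) 0) *ᵥ (C m)) = 0 →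
      ∀ m < t, C m = 0 := by
  intro t
  induction t with
  | zero => intro _ C _ m hm; omega
  | succ t ih =>
    intro ht C h
    have hb : t * k + k ≤ n * k - ℓ := bnd hk hℓ (by omega)
    have hCt : C t = 0 := by
      apply gmap_inj hk hℓ hJ t (by omega) hb
      rw [map_zero]
      funext a
      have hidx : t * k + (a : ℕ) < n * k - ℓ := by have := a.isLt; omega
      have h2 := congrFun h ⟨t * k + (a : ℕ), hidx⟩
      rw [Finset.sum_apply, Finset.sum_range_succ] at h2
      have hvanish : ∑ m ∈ Finset.range t,
          ((J ^ m * Esel k (n * k - ℓ) 0) *ᵥ (C m)) ⟨t * k + (a : ℕ), hidx⟩ = 0 := by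
        apply Finset.sum_eq_zero
        intro m hm
        have hmt : m + 1 ≤ t := Finset.mem_range.mp hm
        have h4 : (m + 1) * k ≤ t * k := Nat.mul_le_mul_right k hmt
        have e : (m + 1) * k = m * k + k := by ring
        exact factZ hk hJ m (C m) _ (by simp only [Fin.val_mk]; omega)
      rw [hvanish, zero_add] at h2
      exact h2
    have hrest : ∀ m < t, C m = 0 := by
      apply ih (by omega) C
      rw [Finset.sum_range_succ, hCt, Matrix.mulVec_zero, add_zero] at h
      exact h
    intro m hm
    by_cases hmt : m = t
    · rw [hmt]; exact hCt
    · exact hrest m (by omega)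

lemma surjAux (hk : 1 ≤ k) (hℓ : ℓ < k) (hJ : IsJkN k n ℓ J) :
    ∀ t, t + 1 ≤ n → ∀ y : Fin (n * k - ℓ) → ℂ,
      (∀ i : Fin (n * k - ℓ), t * k ≤ (i : ℕ) → y i = 0) →
      ∃ C : ℕ → Fin k → ℂ, y = ∑ m ∈ Finset.range t, (J ^ m * Esel k (n * k - ℓ) 0) *ᵥ (C m) := by
  intro t
  induction t with
  | zero =>
    intro _ y hy
    refine ⟨fun _ _ => 0, ?_⟩
    funext i
    rw [Finset.range_zero, Finset.sum_empty]
    exact hy i (by omega)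
  | succ t ih =>
    intro ht y hy
    have hb : t * k + k ≤ n * k - ℓ := bnd hk hℓ (by omega)
    obtain ⟨c, hc⟩ := gmap_surj hk hℓ hJ t (by omega) hb
      (fun a => y ⟨t * k + (a : ℕ), by have := a.isLt; omega⟩)
    set y' : Fin (n * k - ℓ) → ℂ := y - (J ^ t * Esel k (n * k - ℓ) 0) *ᵥ c with hy'def
    have hy' : ∀ i : Fin (n * k - ℓ), t * k ≤ (i : ℕ) → y' i = 0 := by
      intro i hi
      by_cases hik : (i : ℕ) < t * k + k
      · have hieq : i = ⟨t * k + ((i : ℕ) - t * k), by have := i.isLt; omega⟩ :=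
          Fin.ext (by simp only [Fin.val_mk]; omega)
        have h3 := congrFun hc ⟨(i : ℕ) - t * k, by omega⟩
        show y i - ((J ^ t * Esel k (n * k - ℓ) 0) *ᵥ c) i = 0
        rw [hieq]
        rw [sub_eq_zero]
        exact h3.symm
      · have e : (t + 1) * k = t * k + k := by ring
        show y i - ((J ^ t * Esel k (n * k - ℓ) 0) *ᵥ c) i = 0
        rw [hy i (by omega), factZ hk hJ t c i (by omega), sub_zero]
    obtain ⟨C, hC⟩ := ih (by omega) y' hy'
    refine ⟨Function.update C t c, ?_⟩
    rw [Finset.sum_range_succ]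
    have hre : ∑ m ∈ Finset.range t,
        (J ^ m * Esel k (n * k - ℓ) 0) *ᵥ (Function.update C t c m)
        = ∑ m ∈ Finset.range t, (J ^ m * Esel k (n * k - ℓ) 0) *ᵥ (C m) := by
      refine Finset.sum_congr rfl fun m hm => ?_
      have := Finset.mem_range.mp hm
      rw [Function.update_of_ne (by omega) c C]
    rw [hre, Function.update_self, ← hC, hy'def]
    funext i
    simp

lemma surjFull (hk : 1 ≤ k) (hn : 2 ≤ n) (hℓ : ℓ < k) (hJ : IsJkN k n ℓ J)
    (y : Fin (n * k - ℓ) → ℂ) :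
    ∃ C : ℕ → Fin k → ℂ,
      y = ∑ m ∈ Finset.range n, (J ^ m * Esel k (n * k - ℓ) 0) *ᵥ (C m) := by
  have h2 : (n - 1) * k = n * k - k := Nat.sub_one_mul n k
  have h3 : k ≤ n * k := Nat.le_mul_of_pos_left k (by omega)
  obtain ⟨c, hc⟩ := gL_surj hk hn hℓ hJ
    (fun a => y ⟨(n - 1) * k + (a : ℕ), by have := a.isLt; omega⟩)
  set y' : Fin (n * k - ℓ) → ℂ := y - (J ^ (n - 1) * Esel k (n * k - ℓ) 0) *ᵥ c with hy'def
  have hy' : ∀ i : Fin (n * k - ℓ), (n - 1) * k ≤ (i : ℕ) → y' i = 0 := by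
    intro i hi
    have hia : (i : ℕ) - (n - 1) * k < k - ℓ := by have := i.isLt; omega
    have hieq : i = ⟨(n - 1) * k + ((i : ℕ) - (n - 1) * k), by have := i.isLt; omega⟩ :=
      Fin.ext (by simp only [Fin.val_mk]; omega)
    have h4 := congrFun hc ⟨(i : ℕ) - (n - 1) * k, hia⟩
    show y i - ((J ^ (n - 1) * Esel k (n * k - ℓ) 0) *ᵥ c) i = 0
    rw [hieq, sub_eq_zero]
    exact h4.symm
  obtain ⟨C, hC⟩ := surjAux hk hℓ hJ (n - 1) (by omega) y' hy'
  refine ⟨Function.update C (n - 1) c, ?_⟩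
  have hrange : Finset.range n = Finset.range ((n - 1) + 1) := by
    congr 1
    omega
  rw [hrange, Finset.sum_range_succ]
  have hre : ∑ m ∈ Finset.range (n - 1),
      (J ^ m * Esel k (n * k - ℓ) 0) *ᵥ (Function.update C (n - 1) c m)
      = ∑ m ∈ Finset.range (n - 1), (J ^ m * Esel k (n * k - ℓ) 0) *ᵥ (C m) := by
    refine Finset.sum_congr rfl fun m hm => ?_
    have := Finset.mem_range.mp hm
    rw [Function.update_of_ne (by omega) c C]
  rw [hre, Function.update_self, ← hC, hy'def]
  funext i
  simp

end Blocks

section Gram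

variable {k n ℓ : ℕ} {J : Matrix (Fin (n * k - ℓ)) (Fin (n * k - ℓ)) ℂ}
variable {lam : Fin (n * k - ℓ) → ℝ} {vhat : Fin (n * k - ℓ) → (Fin (n * k - ℓ) → ℂ)}
variable {v : Fin (n * k - ℓ) → Fin k → ℂ}

/-- The Krylov coefficient matrix of a polynomial. -/
def toK (n : ℕ) (J : Matrix (Fin (n * k - ℓ)) (Fin (n * k - ℓ)) ℂ)
    (P : Polynomial (Matrix (Fin k) (Fin k) ℂ)) : Matrix (Fin (n * k - ℓ)) (Fin k) ℂ :=
  ∑ m ∈ Finset.range n, J ^ m * Esel k (n * k - ℓ) 0 * P.coeff m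

/-- rank-one spectral projector -/
def Wm (vhat : Fin (n * k - ℓ) → (Fin (n * k - ℓ) → ℂ)) (j : Fin (n * k - ℓ)) :
    Matrix (Fin (n * k - ℓ)) (Fin (n * k - ℓ)) ℂ :=
  vecMulVec (vhat j) (star (vhat j))

lemma sumW (horth : ∀ i j, ∑ a, star (vhat i a) * vhat j a = if i = j then 1 else 0) :
    ∑ j, Wm vhat j = 1 := by
  set U : Matrix (Fin (n * k - ℓ)) (Fin (n * k - ℓ)) ℂ := Matrix.of fun a j => vhat j a with hU
  have hUU : Uᴴ * U = 1 := by
    ext j j'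
    show ∑ a, star (U a j) * U a j' = _
    rw [Matrix.one_apply]
    simpa [hU] using horth j j'
  have hUU' : U * Uᴴ = 1 := mul_eq_one_comm.mp hUU
  ext i i'
  rw [Matrix.sum_apply]
  have := congrFun (congrFun hUU' i) i'
  rw [Matrix.mul_apply] at this
  simpa [hU, Wm, vecMulVec_apply, Matrix.conjTranspose_apply] using this

lemma JW (heig : ∀ j, J.mulVec (vhat j) = (lam j : ℂ) • vhat j) (j : Fin (n * k - ℓ)) :
    J * Wm vhat j = (lam j : ℂ) • Wm vhat j := by
  ext i i'
  rw [Matrix.mul_apply]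
  have := congrFun (heig j) i
  rw [Matrix.mulVec] at this
  show ∑ t, J i t * (vhat j t * star (vhat j i')) = _
  have hre : ∑ t, J i t * (vhat j t * star (vhat j i'))
      = (∑ t, J i t * vhat j t) * star (vhat j i') := by
    rw [Finset.sum_mul]
    exact Finset.sum_congr rfl fun t _ => (mul_assoc _ _ _).symm
  rw [hre, show (∑ t, J i t * vhat j t) = (J *ᵥ vhat j) i from rfl, heig j]
  simp [Wm, vecMulVec_apply, mul_assoc]

lemma WJ (hherm : J.IsHermitian) (heig : ∀ j, J.mulVec (vhat j) = (lam j : ℂ) • vhat j)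
    (j : Fin (n * k - ℓ)) :
    Wm vhat j * J = (lam j : ℂ) • Wm vhat j := by
  ext i i'
  rw [Matrix.mul_apply]
  show ∑ t, (vhat j i * star (vhat j t)) * J t i' = _
  have key : ∑ t, star (vhat j t) * J t i' = (lam j : ℂ) * star (vhat j i') := by
    have : ∑ t, star (vhat j t) * J t i' = star (∑ t, vhat j t * star (J t i')) := by
      rw [star_sum]
      refine Finset.sum_congr rfl fun t _ => ?_
      rw [star_mul', star_star]
    rw [this]
    have hsym : ∀ t, star (J t i') = J i' t := by
      intro t
      have := congrFun (congrFun hherm i') t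
      rw [Matrix.conjTranspose_apply] at this
      exact this
    have : (∑ t, vhat j t * star (J t i')) = (J *ᵥ vhat j) i' := by
      rw [Matrix.mulVec]
      show _ = ∑ t, J i' t * vhat j t
      refine Finset.sum_congr rfl fun t _ => ?_
      rw [hsym t, mul_comm]
    rw [this, heig j]
    show star ((lam j : ℂ) * vhat j i') = _
    rw [star_mul', mul_comm, Complex.star_def, Complex.conj_ofReal, mul_comm]
  have hre : ∑ t, (vhat j i * star (vhat j t)) * J t i'
      = vhat j i * ∑ t, star (vhat j t) * J t i' := by
    rw [Finset.mul_sum]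
    exact Finset.sum_congr rfl fun t _ => (mul_assoc _ _ _)
  rw [hre, key]
  simp [Wm, vecMulVec_apply]
  ring

lemma JpowW (heig : ∀ j, J.mulVec (vhat j) = (lam j : ℂ) • vhat j) (j : Fin (n * k - ℓ))
    (m : ℕ) : J ^ m * Wm vhat j = ((lam j : ℂ)) ^ m • Wm vhat j := by
  induction m with
  | zero => simp
  | succ m ih =>
    rw [pow_succ', Matrix.mul_assoc, ih, Matrix.mul_smul, JW heig j, smul_smul, pow_succ]

lemma WJpow (hherm : J.IsHermitian) (heig : ∀ j, J.mulVec (vhat j) = (lam j : ℂ) • vhat j)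
    (j : Fin (n * k - ℓ)) (m : ℕ) :
    Wm vhat j * J ^ m = ((lam j : ℂ)) ^ m • Wm vhat j := by
  induction m with
  | zero => simp
  | succ m ih =>
    rw [pow_succ, ← Matrix.mul_assoc, ih, Matrix.smul_mul, WJ hherm heig j, smul_smul,
      pow_succ]

lemma vvE (hv : ∀ j, v j = (Esel k (n * k - ℓ) 0)ᴴ.mulVec (vhat j)) (j : Fin (n * k - ℓ)) :
    vecMulVec (v j) (star (v j)) =
      (Esel k (n * k - ℓ) 0)ᴴ * Wm vhat j * Esel k (n * k - ℓ) 0 := by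
  ext a b
  show v j a * star (v j b) = _
  rw [hv j]
  show (∑ i, (Esel k (n * k - ℓ) 0)ᴴ a i * vhat j i) *
      star (∑ i', (Esel k (n * k - ℓ) 0)ᴴ b i' * vhat j i') = _
  rw [star_sum, Finset.sum_mul_sum]
  show _ = ∑ i', (∑ i, (Esel k (n * k - ℓ) 0)ᴴ a i * Wm vhat j i i') *
      Esel k (n * k - ℓ) 0 i' b
  rw [Finset.sum_comm]
  refine Finset.sum_congr rfl fun i' _ => ?_
  rw [Finset.sum_mul]
  refine Finset.sum_congr rfl fun i _ => ?_
  rw [star_mul']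
  have h1 : star ((Esel k (n * k - ℓ) 0)ᴴ b i') = Esel k (n * k - ℓ) 0 i' b := by
    rw [Matrix.conjTranspose_apply, star_star]
  rw [h1]
  show _ * (_ * star (vhat j i')) = _ * (vhat j i * star (vhat j i')) * _
  ring

lemma evalExp (P : Polynomial (Matrix (Fin k) (Fin k) ℂ)) (hP : P.natDegree < n) (c : ℂ) :
    P.eval (c • (1 : Matrix (Fin k) (Fin k) ℂ)) =
      ∑ m ∈ Finset.range n, c ^ m • P.coeff m := by
  rw [Polynomial.eval_eq_sum_range' hP]
  refine Finset.sum_congr rfl fun m _ => ?_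
  rw [_root_.smul_pow, one_pow, Matrix.mul_smul, mul_one]

lemma evalExpH (P : Polynomial (Matrix (Fin k) (Fin k) ℂ)) (hP : P.natDegree < n) (x : ℝ) :
    (P.eval ((x : ℂ) • (1 : Matrix (Fin k) (Fin k) ℂ)))ᴴ =
      ∑ m ∈ Finset.range n, (x : ℂ) ^ m • (P.coeff m)ᴴ := by
  rw [evalExp P hP, Matrix.conjTranspose_sum]
  refine Finset.sum_congr rfl fun m _ => ?_
  rw [Matrix.conjTranspose_smul]
  congr 1
  rw [star_pow, Complex.star_def, Complex.conj_ofReal]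

lemma termL (hherm : J.IsHermitian) (heig : ∀ j, J.mulVec (vhat j) = (lam j : ℂ) • vhat j)
    (j : Fin (n * k - ℓ)) (m m' : ℕ) (A B : Matrix (Fin k) (Fin k) ℂ) :
    ((lam j : ℂ) ^ m • Aᴴ) * ((Esel k (n * k - ℓ) 0)ᴴ * Wm vhat j * Esel k (n * k - ℓ) 0) *
        ((lam j : ℂ) ^ m' • B) =
      (J ^ m * Esel k (n * k - ℓ) 0 * A)ᴴ * Wm vhat j * (J ^ m' * Esel k (n * k - ℓ) 0 * B) := by
  have hpow : (J ^ m)ᴴ = J ^ m := Matrix.IsHermitian.pow hherm m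
  have mid : J ^ m * (Wm vhat j * (J ^ m' * (Esel k (n * k - ℓ) 0 * B)))
      = ((lam j : ℂ) ^ m * (lam j : ℂ) ^ m') •
        (Wm vhat j * (Esel k (n * k - ℓ) 0 * B)) := by
    rw [← Matrix.mul_assoc (Wm vhat j), WJpow hherm heig j m', Matrix.smul_mul,
      Matrix.mul_smul, ← Matrix.mul_assoc, JpowW heig j m, Matrix.smul_mul, smul_smul,
      mul_comm ((lam j : ℂ) ^ m') ((lam j : ℂ) ^ m)]
  calc ((lam j : ℂ) ^ m • Aᴴ) * ((Esel k (n * k - ℓ) 0)ᴴ * Wm vhat j * Esel k (n * k - ℓ) 0) *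
        ((lam j : ℂ) ^ m' • B)
      = ((lam j : ℂ) ^ m * (lam j : ℂ) ^ m') •
        (Aᴴ * ((Esel k (n * k - ℓ) 0)ᴴ * (Wm vhat j * (Esel k (n * k - ℓ) 0 * B)))) := by
        simp only [Matrix.smul_mul, Matrix.mul_smul, smul_smul, Matrix.mul_assoc]
        rw [mul_comm ((lam j : ℂ) ^ m') ((lam j : ℂ) ^ m)]
    _ = Aᴴ * ((Esel k (n * k - ℓ) 0)ᴴ * (J ^ m * (Wm vhat j *
          (J ^ m' * (Esel k (n * k - ℓ) 0 * B))))) := by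
        rw [mid, Matrix.mul_smul, Matrix.mul_smul]
    _ = (J ^ m * Esel k (n * k - ℓ) 0 * A)ᴴ * Wm vhat j *
          (J ^ m' * Esel k (n * k - ℓ) 0 * B) := by
        rw [Matrix.conjTranspose_mul, Matrix.conjTranspose_mul, hpow]
        simp only [Matrix.mul_assoc]

lemma perJ (hherm : J.IsHermitian) (heig : ∀ j, J.mulVec (vhat j) = (lam j : ℂ) • vhat j)
    (hv : ∀ j, v j = (Esel k (n * k - ℓ) 0)ᴴ.mulVec (vhat j))
    (P Q : Polynomial (Matrix (Fin k) (Fin k) ℂ)) (hP : P.natDegree < n) (hQ : Q.natDegree < n)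
    (j : Fin (n * k - ℓ)) :
    (P.eval ((lam j : ℂ) • (1 : Matrix (Fin k) (Fin k) ℂ)))ᴴ *
        vecMulVec (v j) (star (v j)) *
        Q.eval ((lam j : ℂ) • (1 : Matrix (Fin k) (Fin k) ℂ)) =
      (toK n J P)ᴴ * Wm vhat j * toK n J Q := by
  rw [vvE hv j, evalExpH P hP (lam j), evalExp Q hQ]
  rw [toK, toK, Matrix.conjTranspose_sum]
  simp only [Matrix.sum_mul, Matrix.mul_sum]
  refine Finset.sum_congr rfl fun m _ => Finset.sum_congr rfl fun m' _ => ?_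
  exact termL hherm heig j m' m (P.coeff m') (Q.coeff m)

lemma gram (hherm : J.IsHermitian) (heig : ∀ j, J.mulVec (vhat j) = (lam j : ℂ) • vhat j)
    (horth : ∀ i j, ∑ a, star (vhat i a) * vhat j a = if i = j then 1 else 0)
    (hv : ∀ j, v j = (Esel k (n * k - ℓ) 0)ᴴ.mulVec (vhat j))
    (P Q : Polynomial (Matrix (Fin k) (Fin k) ℂ)) (hP : P.natDegree < n)
    (hQ : Q.natDegree < n) :
    innerPoly lam v P Q = (toK n J P)ᴴ * toK n J Q := by
  rw [innerPoly]
  have h1 : ∀ j : Fin (n * k - ℓ), (P.eval ((lam j : ℂ) • (1 : Matrix (Fin k) (Fin k) ℂ)))ᴴ *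
      vecMulVec (v j) (star (v j)) *
      Q.eval ((lam j : ℂ) • (1 : Matrix (Fin k) (Fin k) ℂ)) =
      (toK n J P)ᴴ * Wm vhat j * toK n J Q := fun j => perJ hherm heig hv P Q hP hQ j
  rw [Finset.sum_congr rfl fun j _ => h1 j]
  calc ∑ j, (toK n J P)ᴴ * Wm vhat j * toK n J Q
      = (toK n J P)ᴴ * (∑ j, Wm vhat j) * toK n J Q := by
        rw [Matrix.mul_sum, Matrix.sum_mul]
    _ = (toK n J P)ᴴ * toK n J Q := by rw [sumW horth, Matrix.mul_one]

end Gram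

section Main

open scoped InnerProductSpace

variable (k n ℓ : ℕ)

/-- Identification of `Fin N → ℂ` with the Euclidean space. -/
def toE : (Fin (n * k - ℓ) → ℂ) ≃ₗ[ℂ] EuclideanSpace ℂ (Fin (n * k - ℓ)) :=
  (WithLp.linearEquiv 2 ℂ (Fin (n * k - ℓ) → ℂ)).symm

variable (J : Matrix (Fin (n * k - ℓ)) (Fin (n * k - ℓ)) ℂ)

/-- The Krylov map on coefficient tuples of degree `< n-1`. -/
def PhiM : (Fin (n - 1) → Fin k → ℂ) →ₗ[ℂ] EuclideanSpace ℂ (Fin (n * k - ℓ)) where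
  toFun c := toE k n ℓ (∑ m : Fin (n - 1), (J ^ (m : ℕ) * Esel k (n * k - ℓ) 0) *ᵥ (c m))
  map_add' x y := by
    simp only [Pi.add_apply, Matrix.mulVec_add, Finset.sum_add_distrib, map_add]
  map_smul' r x := by
    simp only [Pi.smul_apply, Matrix.mulVec_smul, ← Finset.smul_sum, RingHom.id_apply]
    exact _root_.map_smul _ r _

variable {k n ℓ J}

lemma toE_apply (x : Fin (n * k - ℓ) → ℂ) (i : Fin (n * k - ℓ)) : toE k n ℓ x i = x i := rfl

lemma inner_toE (x y : Fin (n * k - ℓ) → ℂ) :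
    ⟪toE k n ℓ x, toE k n ℓ y⟫_ℂ = ∑ i, star (x i) * y i := by
  rw [PiLp.inner_apply]
  refine Finset.sum_congr rfl fun i _ => ?_
  rw [RCLike.inner_apply]
  exact mul_comm _ _

lemma entry_inner (A B : Matrix (Fin (n * k - ℓ)) (Fin k) ℂ) (a b : Fin k) :
    (Aᴴ * B) a b = ⟪toE k n ℓ (fun i => A i a), toE k n ℓ (fun i => B i b)⟫_ℂ := by
  rw [inner_toE, Matrix.mul_apply]
  refine Finset.sum_congr rfl fun i _ => ?_
  rw [Matrix.conjTranspose_apply]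

lemma PhiM_inj (hk : 1 ≤ k) (hn : 2 ≤ n) (hℓ : ℓ < k) (hJ : IsJkN k n ℓ J) :
    Function.Injective (PhiM k n ℓ J) := by
  rw [injective_iff_map_eq_zero]
  intro c hc
  have h0 : (∑ m : Fin (n - 1), (J ^ (m : ℕ) * Esel k (n * k - ℓ) 0) *ᵥ (c m)) = 0 := by
    have hc' : toE k n ℓ (∑ m : Fin (n - 1), (J ^ (m : ℕ) * Esel k (n * k - ℓ) 0) *ᵥ (c m))
        = 0 := hc
    have := congrArg (toE k n ℓ).symm hc'
    rwa [LinearEquiv.symm_apply_apply, map_zero] at this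
  set C : ℕ → Fin k → ℂ := fun m => if h : m < n - 1 then c ⟨m, h⟩ else 0 with hC
  have hsum : ∑ m ∈ Finset.range (n - 1), (J ^ m * Esel k (n * k - ℓ) 0) *ᵥ (C m) = 0 := by
    rw [← Fin.sum_univ_eq_sum_range (fun m => (J ^ m * Esel k (n * k - ℓ) 0) *ᵥ (C m)) (n - 1)]
    rw [← h0]
    refine Finset.sum_congr rfl fun m _ => ?_
    have : C (m : ℕ) = c m := by
      rw [hC]
      simp only [Fin.is_lt, dite_true, Fin.eta]
    rw [this]
  have hz := injAux hk hℓ hJ (n - 1) (by omega) C hsum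
  funext m
  have := hz (m : ℕ) m.isLt
  rw [hC] at this
  simp only [Fin.is_lt, dite_true, Fin.eta] at this
  exact this

lemma finrank_V (hk : 1 ≤ k) (hn : 2 ≤ n) (hℓ : ℓ < k) (hJ : IsJkN k n ℓ J) :
    Module.finrank ℂ (LinearMap.range (PhiM k n ℓ J)) = (n - 1) * k := by
  rw [LinearMap.finrank_range_of_inj (PhiM_inj hk hn hℓ hJ)]
  rw [Module.finrank_pi_fintype ℂ]
  have : ∀ m : Fin (n - 1), Module.finrank ℂ (Fin k → ℂ) = k := fun _ => by
    rw [Module.finrank_pi ℂ, Fintype.card_fin]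
  rw [Finset.sum_congr rfl fun m _ => this m]
  rw [Finset.sum_const, Finset.card_univ, Fintype.card_fin, smul_eq_mul]

lemma mem_V_iff (y : EuclideanSpace ℂ (Fin (n * k - ℓ))) :
    y ∈ LinearMap.range (PhiM k n ℓ J) ↔
      ∃ C : ℕ → Fin k → ℂ,
        (toE k n ℓ).symm y = ∑ m ∈ Finset.range (n - 1), (J ^ m * Esel k (n * k - ℓ) 0) *ᵥ (C m) := by
  constructor
  · rintro ⟨c, rfl⟩
    refine ⟨fun m => if h : m < n - 1 then c ⟨m, h⟩ else 0, ?_⟩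
    show (toE k n ℓ).symm (toE k n ℓ _) = _
    rw [LinearEquiv.symm_apply_apply]
    rw [← Fin.sum_univ_eq_sum_range (fun m => (J ^ m * Esel k (n * k - ℓ) 0) *ᵥ
      (if h : m < n - 1 then c ⟨m, h⟩ else 0)) (n - 1)]
    refine Finset.sum_congr rfl fun m _ => ?_
    simp only [Fin.is_lt, dite_true, Fin.eta]
  · rintro ⟨C, hCy⟩
    refine ⟨fun m => C (m : ℕ), ?_⟩
    show toE k n ℓ _ = y
    rw [Fin.sum_univ_eq_sum_range (fun m => (J ^ m * Esel k (n * k - ℓ) 0) *ᵥ (C m)) (n - 1)]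
    rw [← hCy, LinearEquiv.apply_symm_apply]

variable {lam : Fin (n * k - ℓ) → ℝ} {vhat : Fin (n * k - ℓ) → (Fin (n * k - ℓ) → ℂ)}
variable {v : Fin (n * k - ℓ) → Fin k → ℂ}

lemma colK (P : Polynomial (Matrix (Fin k) (Fin k) ℂ)) (b : Fin k) :
    (fun i => toK n J P i b) =
      ∑ m ∈ Finset.range n, (J ^ m * Esel k (n * k - ℓ) 0) *ᵥ (fun a => P.coeff m a b) := by
  funext i
  rw [Finset.sum_apply, toK]
  rw [Matrix.sum_apply]
  refine Finset.sum_congr rfl fun m _ => ?_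
  rw [Matrix.mul_apply]
  rfl

lemma colK_truncate (hn : 2 ≤ n) (Q : Polynomial (Matrix (Fin k) (Fin k) ℂ))
    (hQ : Q.natDegree < n - 1) (b : Fin k) :
    (fun i => toK n J Q i b) =
      ∑ m ∈ Finset.range (n - 1), (J ^ m * Esel k (n * k - ℓ) 0) *ᵥ (fun a => Q.coeff m a b) := by
  rw [colK]
  refine (Finset.sum_subset (Finset.range_subset_range.mpr (by omega)) fun m hm hnot => ?_).symm
  have hm1 : n - 1 ≤ m := by
    by_contra hcon
    exact hnot (Finset.mem_range.mpr (by omega))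
  have hz : Q.coeff m = 0 := Polynomial.coeff_eq_zero_of_natDegree_lt (by omega)
  have : (fun a => Q.coeff m a b) = (0 : Fin k → ℂ) := by
    funext a
    rw [hz]
    rfl
  rw [this, Matrix.mulVec_zero]

lemma colQ_memV (hn : 2 ≤ n) (Q : Polynomial (Matrix (Fin k) (Fin k) ℂ))
    (hQ : Q.natDegree < n - 1) (b : Fin k) :
    toE k n ℓ (fun i => toK n J Q i b) ∈ LinearMap.range (PhiM k n ℓ J) := by
  rw [mem_V_iff]
  refine ⟨fun m => fun a => Q.coeff m a b, ?_⟩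
  rw [LinearEquiv.symm_apply_apply]
  exact colK_truncate hn Q hQ b

lemma cols_orthogonal (hk : 1 ≤ k) (hn : 2 ≤ n) (hℓ : ℓ < k) (hJ : IsJkN k n ℓ J)
    (heig : ∀ j, J.mulVec (vhat j) = (lam j : ℂ) • vhat j)
    (horth : ∀ i j, ∑ a, star (vhat i a) * vhat j a = if i = j then 1 else 0)
    (hv : ∀ j, v j = (Esel k (n * k - ℓ) 0)ᴴ.mulVec (vhat j))
    (Pm : Polynomial (Matrix (Fin k) (Fin k) ℂ)) (hPdeg : Pm.natDegree < n)
    (horthP : ∀ Q : Polynomial (Matrix (Fin k) (Fin k) ℂ), Q.natDegree < n - 1 →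
      innerPoly lam v Q Pm = 0) (b : Fin k) :
    toE k n ℓ (fun i => toK n J Pm i b) ∈ (LinearMap.range (PhiM k n ℓ J))ᗮ := by
  rw [Submodule.mem_orthogonal]
  rintro u ⟨c, rfl⟩
  show ⟪toE k n ℓ (∑ m : Fin (n - 1), (J ^ (m : ℕ) * Esel k (n * k - ℓ) 0) *ᵥ (c m)),
    toE k n ℓ (fun i => toK n J Pm i b)⟫_ℂ = 0
  rw [map_sum, sum_inner]
  apply Finset.sum_eq_zero
  intro m _
  set M : Matrix (Fin k) (Fin k) ℂ := Matrix.of fun a _ => c m a with hM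
  set Q : Polynomial (Matrix (Fin k) (Fin k) ℂ) := Polynomial.C M * X ^ (m : ℕ) with hQ
  have hQd : Q.natDegree < n - 1 :=
    lt_of_le_of_lt (Polynomial.natDegree_C_mul_X_pow_le M (m : ℕ)) m.isLt
  have h0 : (toK n J Q)ᴴ * toK n J Pm = 0 := by
    rw [← gram hJ.1 heig horth hv Q Pm (by omega) hPdeg]
    exact horthP Q hQd
  have hcol : (fun i => toK n J Q i b) = (J ^ (m : ℕ) * Esel k (n * k - ℓ) 0) *ᵥ (c m) := by
    rw [colK]
    rw [Finset.sum_eq_single (m : ℕ)]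
    · congr 1
      funext a
      rw [hQ, Polynomial.coeff_C_mul, Polynomial.coeff_X_pow, if_pos rfl, mul_one]
      rfl
    · intro m' _ hm'
      have : Q.coeff m' = 0 := by
        rw [hQ, Polynomial.coeff_C_mul, Polynomial.coeff_X_pow, if_neg hm', mul_zero]
      rw [this]
      have : (fun a => (0 : Matrix (Fin k) (Fin k) ℂ) a b) = (0 : Fin k → ℂ) := rfl
      rw [this, Matrix.mulVec_zero]
    · intro hnot
      exact absurd (Finset.mem_range.mpr (by omega)) hnot
  rw [← hcol]
  rw [← entry_inner (toK n J Q) (toK n J Pm) b b, h0]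
  rfl

lemma orth_of_cols (hk : 1 ≤ k) (hn : 2 ≤ n) (hℓ : ℓ < k) (hJ : IsJkN k n ℓ J)
    (heig : ∀ j, J.mulVec (vhat j) = (lam j : ℂ) • vhat j)
    (horth : ∀ i j, ∑ a, star (vhat i a) * vhat j a = if i = j then 1 else 0)
    (hv : ∀ j, v j = (Esel k (n * k - ℓ) 0)ᴴ.mulVec (vhat j))
    (Pm : Polynomial (Matrix (Fin k) (Fin k) ℂ)) (hPdeg : Pm.natDegree < n)
    (hcols : ∀ b : Fin k,
      toE k n ℓ (fun i => toK n J Pm i b) ∈ (LinearMap.range (PhiM k n ℓ J))ᗮ) :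
    ∀ Q : Polynomial (Matrix (Fin k) (Fin k) ℂ), Q.natDegree < n - 1 →
      innerPoly lam v Q Pm = 0 := by
  intro Q hQ
  rw [gram hJ.1 heig horth hv Q Pm (by omega) hPdeg]
  ext a b
  rw [entry_inner]
  show ⟪toE k n ℓ (fun i => toK n J Q i a), toE k n ℓ (fun i => toK n J Pm i b)⟫_ℂ
    = (0 : Matrix (Fin k) (Fin k) ℂ) a b
  rw [(Submodule.mem_orthogonal _ _).mp (hcols b) _ (colQ_memV hn Q hQ a)]
  rfl

lemma colTop (hn : 2 ≤ n) (Pm : Polynomial (Matrix (Fin k) (Fin k) ℂ)) (hmon : Pm.Monic)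
    (hdeg : Pm.natDegree = n - 1) (b : Fin k) :
    (fun i => toK n J Pm i b) =
      ((J ^ (n - 1) * Esel k (n * k - ℓ) 0) *ᵥ (fun a => (1 : Matrix (Fin k) (Fin k) ℂ) a b))
        + ∑ m ∈ Finset.range (n - 1),
            (J ^ m * Esel k (n * k - ℓ) 0) *ᵥ (fun a => Pm.coeff m a b) := by
  rw [colK]
  have hrange : Finset.range n = Finset.range ((n - 1) + 1) := by congr 1; omega
  rw [hrange, Finset.sum_range_succ, add_comm]
  congr 1
  have hlead : Pm.coeff (n - 1) = 1 := by rw [← hdeg]; exact hmon.coeff_natDegree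
  rw [hlead]

lemma toK_sub (P Q : Polynomial (Matrix (Fin k) (Fin k) ℂ)) :
    toK n J (P - Q) = toK n J P - toK n J Q := by
  rw [toK, toK, toK, ← Finset.sum_sub_distrib]
  refine Finset.sum_congr rfl fun m _ => ?_
  rw [Polynomial.coeff_sub, Matrix.mul_sub]

lemma exists_Pm (hk : 1 ≤ k) (hn : 2 ≤ n) (hℓ : ℓ < k) (hJ : IsJkN k n ℓ J) :
    ∃ Pm : Polynomial (Matrix (Fin k) (Fin k) ℂ), Pm.Monic ∧ Pm.natDegree = n - 1 ∧
      ∀ b : Fin k,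
        toE k n ℓ (fun i => toK n J Pm i b) ∈ (LinearMap.range (PhiM k n ℓ J))ᗮ := by
  haveI : Nonempty (Fin k) := ⟨⟨0, by omega⟩⟩
  have hsup : LinearMap.range (PhiM k n ℓ J) ⊔ (LinearMap.range (PhiM k n ℓ J))ᗮ = ⊤ :=
    Submodule.sup_orthogonal_of_hasOrthogonalProjection
  have hdec : ∀ b : Fin k, ∃ c : Fin (n - 1) → Fin k → ℂ,
      toE k n ℓ ((J ^ (n - 1) * Esel k (n * k - ℓ) 0) *ᵥ
          (fun a => (1 : Matrix (Fin k) (Fin k) ℂ) a b))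
        - PhiM k n ℓ J c ∈ (LinearMap.range (PhiM k n ℓ J))ᗮ := by
    intro b
    have hmem : toE k n ℓ ((J ^ (n - 1) * Esel k (n * k - ℓ) 0) *ᵥ
        (fun a => (1 : Matrix (Fin k) (Fin k) ℂ) a b)) ∈
        LinearMap.range (PhiM k n ℓ J) ⊔ (LinearMap.range (PhiM k n ℓ J))ᗮ := by
      rw [hsup]
      trivial
    obtain ⟨u, hu, w, hw, huw⟩ := Submodule.mem_sup.mp hmem
    obtain ⟨c, hc⟩ := hu
    refine ⟨c, ?_⟩
    have heq : toE k n ℓ ((J ^ (n - 1) * Esel k (n * k - ℓ) 0) *ᵥ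
        (fun a => (1 : Matrix (Fin k) (Fin k) ℂ) a b)) - PhiM k n ℓ J c = w := by
      rw [hc, ← huw]
      abel
    rw [heq]
    exact hw
  choose cc hcc using hdec
  set Cm : Fin (n - 1) → Matrix (Fin k) (Fin k) ℂ :=
    fun m => Matrix.of fun a b => - cc b m a with hCm
  set S : Polynomial (Matrix (Fin k) (Fin k) ℂ) :=
    ∑ m : Fin (n - 1), Polynomial.C (Cm m) * X ^ (m : ℕ) with hS
  have hSdeg : S.degree < ((n - 1 : ℕ) : WithBot ℕ) := by
    rw [hS]
    apply lt_of_le_of_lt (Polynomial.degree_sum_le _ _)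
    rw [Finset.sup_lt_iff (by exact WithBot.bot_lt_coe _)]
    intro m _
    refine lt_of_le_of_lt (Polynomial.degree_C_mul_X_pow_le _ _) ?_
    exact_mod_cast m.isLt
  set Pm := X ^ (n - 1) + S with hPm
  have hmonic : Pm.Monic := Polynomial.monic_X_pow_add hSdeg
  have hdeg : Pm.natDegree = n - 1 := by
    apply Polynomial.natDegree_eq_of_degree_eq_some
    rw [hPm, Polynomial.degree_add_eq_left_of_degree_lt, Polynomial.degree_X_pow]
    rw [Polynomial.degree_X_pow]
    exact hSdeg
  have hcoeff : ∀ m : Fin (n - 1), Pm.coeff (m : ℕ) = Cm m := by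
    intro m
    have hmne : (m : ℕ) ≠ n - 1 := by have := m.isLt; omega
    rw [hPm, Polynomial.coeff_add, Polynomial.coeff_X_pow, if_neg hmne, zero_add]
    rw [hS, Polynomial.finset_sum_coeff]
    rw [Finset.sum_eq_single m]
    · rw [Polynomial.coeff_C_mul, Polynomial.coeff_X_pow, if_pos rfl, mul_one]
    · intro m' _ hm'
      rw [Polynomial.coeff_C_mul, Polynomial.coeff_X_pow,
        if_neg (fun h => hm' ((Fin.ext h).symm)), mul_zero]
    · intro hnot
      exact absurd (Finset.mem_univ m) hnot
  refine ⟨Pm, hmonic, hdeg, ?_⟩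
  intro b
  rw [colTop hn Pm hmonic hdeg b, map_add]
  have h2 : toE k n ℓ (∑ m ∈ Finset.range (n - 1),
      (J ^ m * Esel k (n * k - ℓ) 0) *ᵥ (fun a => Pm.coeff m a b))
      = - PhiM k n ℓ J (cc b) := by
    rw [← Fin.sum_univ_eq_sum_range
      (fun m => (J ^ m * Esel k (n * k - ℓ) 0) *ᵥ (fun a => Pm.coeff m a b)) (n - 1)]
    have hterm : ∀ m : Fin (n - 1),
        (J ^ (m : ℕ) * Esel k (n * k - ℓ) 0) *ᵥ (fun a => Pm.coeff (m : ℕ) a b)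
          = - ((J ^ (m : ℕ) * Esel k (n * k - ℓ) 0) *ᵥ (cc b m)) := by
      intro m
      have harg : (fun a => Pm.coeff (m : ℕ) a b) = - (cc b m) := by
        funext a
        rw [hcoeff m]
        rfl
      rw [harg, Matrix.mulVec_neg]
    rw [Finset.sum_congr rfl (fun m _ => hterm m)]
    rw [Finset.sum_neg_distrib, map_neg]
    rfl
  rw [h2, ← sub_eq_add_neg]
  exact hcc b

lemma unique_Pm (hk : 1 ≤ k) (hn : 2 ≤ n) (hℓ : ℓ < k) (hJ : IsJkN k n ℓ J)
    (heig : ∀ j, J.mulVec (vhat j) = (lam j : ℂ) • vhat j)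
    (horth : ∀ i j, ∑ a, star (vhat i a) * vhat j a = if i = j then 1 else 0)
    (hv : ∀ j, v j = (Esel k (n * k - ℓ) 0)ᴴ.mulVec (vhat j))
    (P1 P2 : Polynomial (Matrix (Fin k) (Fin k) ℂ))
    (h1m : P1.Monic) (h1d : P1.natDegree = n - 1)
    (h1o : ∀ Q : Polynomial (Matrix (Fin k) (Fin k) ℂ), Q.natDegree < n - 1 →
      innerPoly lam v Q P1 = 0)
    (h2m : P2.Monic) (h2d : P2.natDegree = n - 1)
    (h2o : ∀ Q : Polynomial (Matrix (Fin k) (Fin k) ℂ), Q.natDegree < n - 1 →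
      innerPoly lam v Q P2 = 0) :
    P1 = P2 := by
  haveI : Nonempty (Fin k) := ⟨⟨0, by omega⟩⟩
  by_cases hEq : P1 = P2
  · exact hEq
  have hne : P1 - P2 ≠ 0 := sub_ne_zero.mpr hEq
  have hDdeg : (P1 - P2).natDegree < n - 1 := by
    rw [Polynomial.natDegree_lt_iff_degree_lt hne]
    have hlt := Polynomial.degree_sub_lt (p := P1) (q := P2)
      (by rw [Polynomial.degree_eq_natDegree h1m.ne_zero,
        Polynomial.degree_eq_natDegree h2m.ne_zero, h1d, h2d])
      h1m.ne_zero (by rw [h1m.leadingCoeff, h2m.leadingCoeff])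
    calc (P1 - P2).degree < P1.degree := hlt
      _ = ((n - 1 : ℕ) : WithBot ℕ) := by
          rw [Polynomial.degree_eq_natDegree h1m.ne_zero, h1d]
  have hcols0 : toK n J (P1 - P2) = 0 := by
    have hmem : ∀ b : Fin k, toE k n ℓ (fun i => toK n J (P1 - P2) i b) ∈
        LinearMap.range (PhiM k n ℓ J) := fun b => colQ_memV hn _ hDdeg b
    have hperp : ∀ b : Fin k, toE k n ℓ (fun i => toK n J (P1 - P2) i b) ∈
        (LinearMap.range (PhiM k n ℓ J))ᗮ := by
      intro b
      have hsub : (fun i => toK n J (P1 - P2) i b)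
          = (fun i => toK n J P1 i b) - (fun i => toK n J P2 i b) := by
        rw [toK_sub]
        rfl
      rw [hsub, map_sub]
      exact Submodule.sub_mem _
        (cols_orthogonal hk hn hℓ hJ heig horth hv P1 (by omega) h1o b)
        (cols_orthogonal hk hn hℓ hJ heig horth hv P2 (by omega) h2o b)
    ext i b
    have h0 : toE k n ℓ (fun i => toK n J (P1 - P2) i b) = 0 := by
      have hmemInf : toE k n ℓ (fun i => toK n J (P1 - P2) i b) ∈
          LinearMap.range (PhiM k n ℓ J) ⊓ (LinearMap.range (PhiM k n ℓ J))ᗮ :=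
        Submodule.mem_inf.mpr ⟨hmem b, hperp b⟩
      rw [Submodule.inf_orthogonal_eq_bot] at hmemInf
      exact (Submodule.mem_bot ℂ).mp hmemInf
    have hfun : (fun i => toK n J (P1 - P2) i b) = 0 := by
      have := congrArg (toE k n ℓ).symm h0
      rwa [LinearEquiv.symm_apply_apply, map_zero] at this
    exact congrFun hfun i
  have hcoeffs : ∀ m, (P1 - P2).coeff m = 0 := by
    intro m
    by_cases hm : m < n - 1
    · ext a b
      have hcol0 : ∑ m' ∈ Finset.range (n - 1),
          (J ^ m' * Esel k (n * k - ℓ) 0) *ᵥ (fun a => (P1 - P2).coeff m' a b) = 0 := by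
        rw [← colK_truncate hn _ hDdeg b, hcols0]
        rfl
      have := injAux hk hℓ hJ (n - 1) (by omega)
        (fun m' => fun a => (P1 - P2).coeff m' a b) hcol0 m hm
      exact congrFun this a
    · exact Polynomial.coeff_eq_zero_of_natDegree_lt (by omega)
  have hD0 : P1 - P2 = 0 :=
    Polynomial.ext fun m => (hcoeffs m).trans (Polynomial.coeff_zero m).symm
  exact sub_eq_zero.mp hD0

lemma sum_mulVec' (F : ℕ → Matrix (Fin (n * k - ℓ)) (Fin k) ℂ) (s : Finset ℕ)
    (x : Fin k → ℂ) : (∑ m ∈ s, F m) *ᵥ x = ∑ m ∈ s, F m *ᵥ x := by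
  funext i
  rw [Finset.sum_apply]
  show ∑ b, (∑ m ∈ s, F m) i b * x b = ∑ m ∈ s, (F m *ᵥ x) i
  simp only [Matrix.sum_apply, Finset.sum_mul]
  rw [Finset.sum_comm]
  rfl

open scoped ComplexOrder in
lemma rank_Pm (hk : 1 ≤ k) (hn : 2 ≤ n) (hℓ : ℓ < k) (hJ : IsJkN k n ℓ J)
    (heig : ∀ j, J.mulVec (vhat j) = (lam j : ℂ) • vhat j)
    (horth : ∀ i j, ∑ a, star (vhat i a) * vhat j a = if i = j then 1 else 0)
    (hv : ∀ j, v j = (Esel k (n * k - ℓ) 0)ᴴ.mulVec (vhat j))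
    (Pm : Polynomial (Matrix (Fin k) (Fin k) ℂ)) (hmon : Pm.Monic)
    (hdeg : Pm.natDegree = n - 1)
    (horthP : ∀ Q : Polynomial (Matrix (Fin k) (Fin k) ℂ), Q.natDegree < n - 1 →
      innerPoly lam v Q Pm = 0) :
    (innerPoly lam v Pm Pm).rank = k - ℓ := by
  have hPn : Pm.natDegree < n := by omega
  rw [gram hJ.1 heig horth hv Pm Pm hPn hPn, Matrix.rank_conjTranspose_mul_self]
  have hcols : ∀ b : Fin k, toE k n ℓ (fun i => toK n J Pm i b) ∈
      (LinearMap.range (PhiM k n ℓ J))ᗮ :=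
    cols_orthogonal hk hn hℓ hJ heig horth hv Pm hPn horthP
  have himg : ∀ x : Fin k → ℂ, toE k n ℓ ((toK n J Pm) *ᵥ x) ∈
      (LinearMap.range (PhiM k n ℓ J))ᗮ := by
    intro x
    have hGx : (toK n J Pm) *ᵥ x = ∑ b, x b • (fun i => toK n J Pm i b) := by
      funext i
      rw [Finset.sum_apply]
      show ∑ b, toK n J Pm i b * x b = _
      refine Finset.sum_congr rfl fun b _ => ?_
      show toK n J Pm i b * x b = x b • toK n J Pm i b
      rw [smul_eq_mul, mul_comm]
    rw [hGx, map_sum]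
    apply Submodule.sum_mem
    intro b _
    rw [_root_.map_smul]
    exact Submodule.smul_mem _ _ (hcols b)
  have hrange : LinearMap.range ((toE k n ℓ).toLinearMap ∘ₗ (toK n J Pm).mulVecLin)
      = (LinearMap.range (PhiM k n ℓ J))ᗮ := by
    apply le_antisymm
    · rintro y ⟨x, rfl⟩
      show toE k n ℓ ((toK n J Pm).mulVecLin x) ∈ _
      rw [Matrix.mulVecLin_apply]
      exact himg x
    · intro y hy
      obtain ⟨C, hC⟩ := surjFull hk hn hℓ hJ ((toE k n ℓ).symm y)
      set w := C (n - 1) with hw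
      have hz : toE k n ℓ ((toK n J Pm) *ᵥ w) ∈ (LinearMap.range (PhiM k n ℓ J))ᗮ := himg w
      have hGw : (toK n J Pm) *ᵥ w = ∑ m ∈ Finset.range n,
          (J ^ m * Esel k (n * k - ℓ) 0) *ᵥ ((Pm.coeff m) *ᵥ w) := by
        rw [toK, sum_mulVec']
        refine Finset.sum_congr rfl fun m _ => ?_
        rw [← Matrix.mulVec_mulVec]
      have hdiff : (toE k n ℓ).symm y - (toK n J Pm) *ᵥ w = ∑ m ∈ Finset.range (n - 1),
          (J ^ m * Esel k (n * k - ℓ) 0) *ᵥ (C m - (Pm.coeff m) *ᵥ w) := by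
        rw [hC, hGw, ← Finset.sum_sub_distrib]
        simp only [← Matrix.mulVec_sub]
        have hsplit : Finset.range n = Finset.range ((n - 1) + 1) := by congr 1; omega
        rw [hsplit, Finset.sum_range_succ]
        have hlast : C (n - 1) - (Pm.coeff (n - 1)) *ᵥ w = 0 := by
          have h1 : Pm.coeff (n - 1) = 1 := by rw [← hdeg]; exact hmon.coeff_natDegree
          rw [h1, Matrix.one_mulVec, hw, sub_self]
        rw [hlast, Matrix.mulVec_zero, add_zero]
      have hdmem : toE k n ℓ ((toE k n ℓ).symm y - (toK n J Pm) *ᵥ w) ∈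
          LinearMap.range (PhiM k n ℓ J) := by
        rw [mem_V_iff, LinearEquiv.symm_apply_apply]
        exact ⟨fun m => C m - (Pm.coeff m) *ᵥ w, hdiff⟩
      have hmap : toE k n ℓ ((toE k n ℓ).symm y - (toK n J Pm) *ᵥ w)
          = y - toE k n ℓ ((toK n J Pm) *ᵥ w) := by
        rw [map_sub, LinearEquiv.apply_symm_apply]
      have hy2 : y - toE k n ℓ ((toK n J Pm) *ᵥ w) ∈ (LinearMap.range (PhiM k n ℓ J))ᗮ :=
        Submodule.sub_mem _ hy hz
      have h0 : y - toE k n ℓ ((toK n J Pm) *ᵥ w) = 0 := by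
        have hmemInf : y - toE k n ℓ ((toK n J Pm) *ᵥ w) ∈
            LinearMap.range (PhiM k n ℓ J) ⊓ (LinearMap.range (PhiM k n ℓ J))ᗮ :=
          Submodule.mem_inf.mpr ⟨hmap ▸ hdmem, hy2⟩
        rw [Submodule.inf_orthogonal_eq_bot] at hmemInf
        exact (Submodule.mem_bot ℂ).mp hmemInf
      refine ⟨w, ?_⟩
      show toE k n ℓ ((toK n J Pm).mulVecLin w) = y
      rw [Matrix.mulVecLin_apply]
      have := sub_eq_zero.mp h0
      exact this.symm
  have hrank : (toK n J Pm).rank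
      = Module.finrank ℂ ↥(LinearMap.range (PhiM k n ℓ J))ᗮ := by
    rw [← hrange, LinearMap.range_comp]
    show Module.finrank ℂ ↥(LinearMap.range (toK n J Pm).mulVecLin) = _
    exact (LinearEquiv.finrank_map_eq (toE k n ℓ) _).symm
  rw [hrank]
  have h1 := Submodule.finrank_add_finrank_orthogonal (LinearMap.range (PhiM k n ℓ J))
  rw [finrank_V hk hn hℓ hJ] at h1
  have h2 : Module.finrank ℂ (EuclideanSpace ℂ (Fin (n * k - ℓ))) = n * k - ℓ :=
    finrank_euclideanSpace_fin
  rw [h2] at h1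
  have h3 : (n - 1) * k + k = n * k := by
    have e := Nat.sub_one_mul n k
    have hkn : k ≤ n * k := Nat.le_mul_of_pos_left k (by omega)
    omega
  omega

end Main

end MopAux

/-- For `J ∈ 𝒥_{k,N}` with spectral measure `μ = φ(J)`, the monic
orthogonal polynomial `Π_{n-1}` of degree `n-1` for `μ` exists, is unique, and its Gram
matrix `⟨Π_{n-1},Π_{n-1}⟩_μ` has rank `k - ℓ`. -/
theorem monic_orthogonal_polynomial_rank
    (k n ℓ : ℕ) (hk : 1 ≤ k) (hn : 2 ≤ n) (hℓ : ℓ < k)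
    (J : Matrix (Fin (n * k - ℓ)) (Fin (n * k - ℓ)) ℂ) (hJ : IsJkN k n ℓ J)
    (lam : Fin (n * k - ℓ) → ℝ) (vhat : Fin (n * k - ℓ) → (Fin (n * k - ℓ) → ℂ))
    (heig : ∀ j, J.mulVec (vhat j) = (lam j : ℂ) • vhat j)
    (horth : ∀ i j, ∑ a, star (vhat i a) * vhat j a = if i = j then 1 else 0)
    (v : Fin (n * k - ℓ) → Fin k → ℂ)
    (hv : ∀ j, v j = (Esel k (n * k - ℓ) 0)ᴴ.mulVec (vhat j)) :
    (∃! Pm : Polynomial (Matrix (Fin k) (Fin k) ℂ),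
        Pm.Monic ∧ Pm.natDegree = n - 1 ∧
        (∀ Q : Polynomial (Matrix (Fin k) (Fin k) ℂ), Q.natDegree < n - 1 →
          innerPoly lam v Q Pm = 0)) ∧
    (∀ Pm : Polynomial (Matrix (Fin k) (Fin k) ℂ),
        Pm.Monic → Pm.natDegree = n - 1 →
        (∀ Q : Polynomial (Matrix (Fin k) (Fin k) ℂ), Q.natDegree < n - 1 →
          innerPoly lam v Q Pm = 0) →
        (innerPoly lam v Pm Pm).rank = k - ℓ) := by
  obtain ⟨Pm, hmon, hdeg, hcols⟩ := MopAux.exists_Pm hk hn hℓ hJ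
  have horthP : ∀ Q : Polynomial (Matrix (Fin k) (Fin k) ℂ), Q.natDegree < n - 1 →
      innerPoly lam v Q Pm = 0 :=
    MopAux.orth_of_cols hk hn hℓ hJ heig horth hv Pm (by omega) hcols
  constructor
  · refine ⟨Pm, ⟨hmon, hdeg, horthP⟩, ?_⟩
    rintro P' ⟨h'm, h'd, h'o⟩
    exact MopAux.unique_Pm hk hn hℓ hJ heig horth hv P' Pm h'm h'd h'o hmon hdeg horthP
  · intro P' h'm h'd h'o
    exact MopAux.rank_Pm hk hn hℓ hJ heig horth hv P' h'm h'd h'o
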